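/- With coupling constants c^k as in the amplitude process with angle θ = π/16, the edges e^1 and e^2 do not interfere (|ã(e^1)+ã(e^2)|^2 = |ã(e^1)|^2 + |ã(e^2)|^2), while e^1 and e^3 interfere constructively: |ã(e^1)+ã(e^3)|^2 = cos^2(π/16)/(1 − sin(π/8)) > |ã(e^1)|^2 + |ã(e^3)|^2 = 1/(2(1 − sin(π/8))). -/

import Mathlib

open Real

lemma Zsq' : (2 * Real.sqrt 2 * Real.sin (π / 4 - π / 16)) ^ 2
    = 4 * (1 - Real.sin (π / 8)) := by
  have h : Real.sin (π/8) = Real.cos (2 * (π/4 - π/16)) := by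
    rw [show 2*(π/4 - π/16) = π/2 - π/8 by ring, Real.cos_pi_div_two_sub]
  rw [h]
  have h2 : Real.sqrt 2 ^ 2 = 2 := Real.sq_sqrt (by norm_num)
  have hc := Real.cos_two_mul (π/4 - π/16)
  have hs := Real.sin_sq_add_cos_sq (π/4 - π/16)
  nlinarith [h2, hc, hs]

lemma Zpos' : 0 < 2 * Real.sqrt 2 * Real.sin (π / 4 - π / 16) := by
  have h1 : (0:ℝ) < Real.sqrt 2 := by positivity
  have h2 : 0 < Real.sin (π/4 - π/16) := by
    apply Real.sin_pos_of_pos_of_lt_pi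
    · have := Real.pi_pos; linarith
    · have := Real.pi_pos; linarith
  positivity

lemma spos' : 0 < 1 - Real.sin (π / 8) := by
  have h1 : Real.sin (π/8) < π/8 := Real.sin_lt (by positivity)
  have := Real.pi_le_four
  linarith

theorem interference_at_theta_pi16 :
    let z : ℂ := ((2 * Real.sqrt 2 * Real.sin (π / 4 - π / 16) : ℝ) : ℂ)
    let a1 : ℂ := Complex.exp ((π / 16 : ℝ) * Complex.I) / z
    let a2 : ℂ := Complex.I * a1
    let a3 : ℂ := Complex.exp (-(π / 16 : ℝ) * Complex.I) / z
    ‖a1 + a2‖ ^ 2 = ‖a1‖ ^ 2 + ‖a2‖ ^ 2 ∧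
    ‖a1 + a3‖ ^ 2 = Real.cos (π / 16) ^ 2 / (1 - Real.sin (π / 8)) ∧
    ‖a1‖ ^ 2 + ‖a3‖ ^ 2 = 1 / (2 * (1 - Real.sin (π / 8))) ∧
    ‖a1 + a3‖ ^ 2 > ‖a1‖ ^ 2 + ‖a3‖ ^ 2 := by
  intro z a1 a2 a3
  set Z : ℝ := 2 * Real.sqrt 2 * Real.sin (π / 4 - π / 16) with hZ
  have hZpos : 0 < Z := Zpos'
  have hZsq : Z ^ 2 = 4 * (1 - Real.sin (π/8)) := Zsq'
  have hspos : 0 < 1 - Real.sin (π/8) := spos'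
  have hZne : Z ≠ 0 := ne_of_gt hZpos
  have hZ2ne : Z ^ 2 ≠ 0 := pow_ne_zero _ hZne
  have h2sne : 2 * (1 - Real.sin (π/8)) ≠ 0 := by positivity
  have hsne : 1 - Real.sin (π/8) ≠ 0 := ne_of_gt hspos
  have habsz : ‖z‖ = Z := by
    rw [show z = (Z : ℂ) from rfl, Complex.norm_real, Real.norm_eq_abs, abs_of_pos hZpos]
  have e1 : ‖Complex.exp (((π/16 : ℝ) : ℂ) * Complex.I)‖ = 1 :=
    Complex.norm_exp_ofReal_mul_I _
  have e3 : ‖Complex.exp (-((π/16 : ℝ) : ℂ) * Complex.I)‖ = 1 := by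
    rw [show -((π/16 : ℝ) : ℂ) = ((-(π/16) : ℝ) : ℂ) by push_cast; ring]
    exact Complex.norm_exp_ofReal_mul_I _
  have ha1 : ‖a1‖ = 1 / Z := by
    rw [show a1 = Complex.exp (((π/16 : ℝ) : ℂ) * Complex.I) / z from rfl,
      norm_div, e1, habsz]
  have ha2 : ‖a2‖ = 1 / Z := by
    rw [show a2 = Complex.I * a1 from rfl, norm_mul, Complex.norm_I, one_mul, ha1]
  have ha3 : ‖a3‖ = 1 / Z := by
    rw [show a3 = Complex.exp (-((π/16 : ℝ) : ℂ) * Complex.I) / z from rfl,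
      norm_div, e3, habsz]
  have hcos : 0 < Real.cos (π/16) := by
    apply Real.cos_pos_of_mem_Ioo
    constructor <;> (have := Real.pi_pos; linarith)
  -- First claim
  have h12 : a1 + a2 = (1 + Complex.I) * a1 := by ring
  have habs12 : ‖a1 + a2‖ ^ 2 = 2 / Z ^ 2 := by
    rw [h12, norm_mul, ha1, mul_pow]
    have habsI : ‖1 + Complex.I‖ ^ 2 = 2 := by
      rw [Complex.sq_norm]
      simp [Complex.normSq_apply]
      norm_num
    rw [habsI]
    ring
  -- a1 + a3 = 2cos(π/16)/z
  have h13 : a1 + a3 = ((2 * Real.cos (π/16) : ℝ) : ℂ) / z := by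
    show Complex.exp (((π/16 : ℝ) : ℂ) * Complex.I) / z
        + Complex.exp (-((π/16 : ℝ) : ℂ) * Complex.I) / z = _
    rw [← add_div]
    congr 1
    rw [show -((π/16 : ℝ) : ℂ) = ((-(π/16) : ℝ) : ℂ) by push_cast; ring,
      Complex.exp_mul_I, Complex.exp_mul_I, Complex.ofReal_neg, Complex.cos_neg,
      Complex.sin_neg, Complex.ofReal_mul, Complex.ofReal_cos]
    push_cast
    ring
  have habs13 : ‖a1 + a3‖ ^ 2 = 4 * Real.cos (π/16) ^ 2 / Z ^ 2 := by
    rw [h13, norm_div, habsz, Complex.norm_real, Real.norm_eq_abs,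
      abs_of_pos (by positivity : (0:ℝ) < 2 * Real.cos (π/16)), div_pow]
    ring
  have eq2 : ‖a1 + a3‖ ^ 2
      = Real.cos (π/16) ^ 2 / (1 - Real.sin (π/8)) := by
    rw [habs13, hZsq, show (4:ℝ) * Real.cos (π/16) ^ 2 = Real.cos (π/16) ^ 2 * 4 by ring,
      show (4:ℝ) * (1 - Real.sin (π/8)) = (1 - Real.sin (π/8)) * 4 by ring,
      mul_div_mul_right _ _ (by norm_num : (4:ℝ) ≠ 0)]
  have eq3 : ‖a1‖ ^ 2 + ‖a3‖ ^ 2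
      = 1 / (2 * (1 - Real.sin (π/8))) := by
    rw [ha1, ha3, show (1/Z)^2 + (1/Z)^2 = 2 / Z^2 by ring, hZsq,
      div_eq_div_iff (by positivity) h2sne]
    ring
  refine ⟨?_, eq2, eq3, ?_⟩
  · rw [habs12, ha1, ha2, show (1/Z)^2 + (1/Z)^2 = 2 / Z^2 by ring]
  · rw [gt_iff_lt, eq2, eq3]
    have hcoslt : Real.cos (π/4) < Real.cos (π/16) := by
      apply Real.cos_lt_cos_of_nonneg_of_le_pi
      · have := Real.pi_pos; linarith
      · have := Real.pi_pos; linarith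
      · have := Real.pi_pos; linarith
    have hc4 : Real.cos (π/4) = Real.sqrt 2 / 2 := Real.cos_pi_div_four
    have h2 : Real.sqrt 2 ^ 2 = 2 := Real.sq_sqrt (by norm_num)
    have h5 : Real.sqrt 2 / 2 < Real.cos (π/16) := by rw [← hc4]; exact hcoslt
    have h6 : (Real.sqrt 2 / 2) ^ 2 < Real.cos (π/16) ^ 2 :=
      pow_lt_pow_left₀ h5 (by positivity) (by norm_num)
    have hgt : (1:ℝ)/2 < Real.cos (π/16) ^ 2 := by nlinarith [h2, h6]
    rw [div_lt_div_iff₀ (by positivity) hspos]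
    nlinarith [hgt, hspos]
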